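/- Let {ξ_t} be a sequence of nonnegative reals satisfying ξ_t − ξ_{t+1} ≥ ξ_{t+1}^{1+α} for some α > 0 and all t ≥ 0. Then for all t ≥ 1, ξ_t ≤ [ (1 + 1/α)(1 + ξ_0^α) / t ]^{1/α}. -/

import Mathlib

open Real

private lemma key_ineq (α x : ℝ) (hα : 0 < α) (hx0 : 0 ≤ x) (hx1 : x ≤ 1) :
    (1 - x) ^ α ≤ 1 - α * x / (1 + α) := by
  have h1α : (0:ℝ) < 1 + α := by linarith
  rcases le_or_gt α 1 with hα1 | hα1
  · have hb := rpow_one_add_le_one_add_mul_self (s := -x) (by linarith) hα.le hα1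
    have h2 : α * x / (1 + α) ≤ α * x := div_le_self (by positivity) (by linarith)
    have he : (1 - x : ℝ) = 1 + -x := by ring
    rw [he]
    linarith [hb]
  · rcases eq_or_lt_of_le hx1 with h1 | h1
    · subst h1
      rw [sub_self, Real.zero_rpow hα.ne']
      rw [sub_nonneg.symm.symm]
      have : α * 1 / (1 + α) ≤ 1 := by rw [div_le_one h1α]; linarith
      linarith
    · have hbase : (0:ℝ) < 1 - x := by linarith
      have h3 := rpow_le_rpow_of_exponent_ge hbase (by linarith) hα1.le
      rw [rpow_one] at h3
      have h2 : α * x / (1 + α) ≤ x := by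
        rw [div_le_iff₀ h1α]; nlinarith
      linarith

private lemma key2 (α y z : ℝ) (hα : 0 < α) (hy : 0 ≤ y) (hz : y ≤ z) (hz0 : 0 < z) :
    y ^ α * ((1 + α) * z) ≤ z ^ α * ((1 + α) * z - α * (z - y)) := by
  have h1α : (0:ℝ) < 1 + α := by linarith
  have hx0 : 0 ≤ (z - y) / z := div_nonneg (by linarith) hz0.le
  have hx1 : (z - y) / z ≤ 1 := by rw [div_le_one hz0]; linarith
  have hk := key_ineq α ((z - y) / z) hα hx0 hx1
  have h1 : (1 : ℝ) - (z - y) / z = y / z := by field_simp; ring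
  rw [h1, div_rpow hy hz0.le] at hk
  rw [div_le_iff₀ (rpow_pos_of_pos hz0 α)] at hk
  have hmul := mul_le_mul_of_nonneg_right hk (show (0:ℝ) ≤ (1 + α) * z by positivity)
  have heq : (1 - α * ((z - y) / z) / (1 + α)) * z ^ α * ((1 + α) * z)
      = z ^ α * ((1 + α) * z - α * (z - y)) := by
    field_simp
  calc y ^ α * ((1 + α) * z) ≤ (1 - α * ((z - y) / z) / (1 + α)) * z ^ α * ((1 + α) * z) := by
        linarith [hmul]
    _ = z ^ α * ((1 + α) * z - α * (z - y)) := heq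

private lemma step_lemma (α u0 a b : ℝ) (hα : 0 < α) (hb : 0 < b) (hba : b ≤ a)
    (hau : a ≤ u0) (h : b ^ (1 + α) ≤ a - b) :
    α * (b ^ α * a ^ α) ≤ (a ^ α - b ^ α) * ((1 + α) * (1 + u0 ^ α)) := by
  have ha : 0 < a := hb.trans_le hba
  have hu : 0 < u0 := ha.trans_le hau
  have hs : 0 < u0 ^ α := rpow_pos_of_pos hu α
  have hsa : 0 < a ^ α := rpow_pos_of_pos ha α
  have hsb : 0 < b ^ α := rpow_pos_of_pos hb α
  have hsas : a ^ α ≤ u0 ^ α := rpow_le_rpow ha.le hau hα.le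
  have h1α : (0:ℝ) < 1 + α := by linarith
  have hb1 : b ^ (1 + α) = b ^ (1:ℝ) * b ^ α := Real.rpow_add hb 1 α
  rw [rpow_one] at hb1
  by_cases hc : b * (1 + u0 ^ α) ≤ a
  · -- slow ratio case
    have hP1 : (1:ℝ) ≤ (1 + u0 ^ α) ^ α := by
      calc (1:ℝ) = 1 ^ α := (one_rpow α).symm
        _ ≤ (1 + u0 ^ α) ^ α := rpow_le_rpow zero_le_one (by linarith) hα.le
    have f1 : b ^ α * (1 + u0 ^ α) ^ α ≤ a ^ α := by
      rw [← mul_rpow hb.le (by linarith)]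
      exact rpow_le_rpow (by positivity) hc hα.le
    have f2 := key2 α 1 (1 + u0 ^ α) hα zero_le_one (by linarith) (by linarith)
    rw [one_rpow] at f2
    have g1 : α * u0 ^ α ≤ ((1 + u0 ^ α) ^ α - 1) * ((1 + α) * (1 + u0 ^ α)) := by
      nlinarith [mul_nonneg (sub_nonneg.2 hP1) (mul_pos hα hs).le]
    have g2 : b ^ α * ((1 + u0 ^ α) ^ α - 1) ≤ a ^ α - b ^ α := by nlinarith [f1]
    nlinarith [mul_le_mul_of_nonneg_right g2 (show (0:ℝ) ≤ (1 + α) * (1 + u0 ^ α) by positivity),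
      mul_le_mul_of_nonneg_left g1 hsb.le,
      mul_le_mul_of_nonneg_left hsas (mul_pos hα hsb).le]
  · -- fast ratio case
    push_neg at hc
    have f4 := key2 α b a hα hb.le hba ha
    have f5 : b * b ^ α ≤ a - b := by rw [← hb1]; exact h
    have g3 : α * (b * (b ^ α * a ^ α)) ≤ (a ^ α - b ^ α) * ((1 + α) * a) := by
      nlinarith [f4, mul_le_mul_of_nonneg_left f5 (mul_pos hα hsa).le]
    have hsbsa : b ^ α ≤ a ^ α := rpow_le_rpow hb.le hba hα.le
    nlinarith [g3, mul_le_mul_of_nonneg_left hc.le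
        (mul_nonneg (sub_nonneg.2 hsbsa) h1α.le), hb, mul_pos hsb hsa]

/-- Rate of convergence of a nonnegative sequence satisfying
`ξ_t − ξ_{t+1} ≥ ξ_{t+1}^(1+α)`. -/
theorem stmt_5 (α : ℝ) (hα : 0 < α) (ξ : ℕ → ℝ)
    (hpos : ∀ t, 0 ≤ ξ t)
    (hdec : ∀ t, ξ (t + 1) ^ (1 + α) ≤ ξ t - ξ (t + 1)) :
    ∀ t : ℕ, 1 ≤ t →
      ξ t ≤ ((1 + 1 / α) * (1 + ξ 0 ^ α) / (t : ℝ)) ^ (1 / α) := by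
  have h1α : (0:ℝ) < 1 + α := by linarith
  have hmono : ∀ t, ξ (t + 1) ≤ ξ t := by
    intro t
    have h1 := hdec t
    have h2 : 0 ≤ ξ (t + 1) ^ (1 + α) := rpow_nonneg (hpos (t + 1)) _
    linarith
  have hmono0 : ∀ t, ξ t ≤ ξ 0 := by
    intro t
    induction t with
    | zero => exact le_refl _
    | succ n ih => exact (hmono n).trans ih
  have hA1 : (0:ℝ) < 1 + 1 / α := by
    have := one_div_pos.2 hα; linarith
  have hA2 : (0:ℝ) < 1 + ξ 0 ^ α := by
    have := rpow_nonneg (hpos 0) α; linarith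
  have hA : (0:ℝ) < (1 + 1 / α) * (1 + ξ 0 ^ α) := mul_pos hA1 hA2
  have main : ∀ t : ℕ, (t : ℝ) * ξ t ^ α ≤ (1 + 1 / α) * (1 + ξ 0 ^ α) := by
    intro t
    induction t with
    | zero => simpa using hA.le
    | succ n ih =>
      by_cases hb : ξ (n + 1) = 0
      · rw [hb, Real.zero_rpow hα.ne', mul_zero]
        exact hA.le
      · have hbpos : 0 < ξ (n + 1) := lt_of_le_of_ne (hpos _) (Ne.symm hb)
        have hstep := step_lemma α (ξ 0) (ξ n) (ξ (n + 1)) hα hbpos (hmono n)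
          (hmono0 n) (hdec n)
        have hsa : 0 < ξ n ^ α := rpow_pos_of_pos (hbpos.trans_le (hmono n)) α
        have hsb : 0 < ξ (n + 1) ^ α := rpow_pos_of_pos hbpos α
        have hAeq : (1 + α) * (1 + ξ 0 ^ α) = α * ((1 + 1 / α) * (1 + ξ 0 ^ α)) := by
          have h' : α * (1 / α) = 1 := mul_one_div_cancel hα.ne'
          linear_combination (-(1 + ξ 0 ^ α)) * h'
        rw [hAeq] at hstep
        have hstep' : ξ n ^ α * ξ (n + 1) ^ α
            ≤ (ξ n ^ α - ξ (n + 1) ^ α) * ((1 + 1 / α) * (1 + ξ 0 ^ α)) := by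
          have h := hstep
          nlinarith [h, hα]
        push_cast
        nlinarith [mul_le_mul_of_nonneg_right ih hsb.le, hstep', hsa, hsb]
  intro t ht
  have h0 : (0:ℝ) < (t : ℝ) := by exact_mod_cast Nat.lt_of_lt_of_le Nat.zero_lt_one ht
  have hle : ξ t ^ α ≤ (1 + 1 / α) * (1 + ξ 0 ^ α) / (t : ℝ) := by
    rw [le_div_iff₀ h0]
    linarith [main t]
  have hrepr : (ξ t ^ α) ^ (1 / α) = ξ t := by
    rw [← Real.rpow_mul (hpos t), mul_one_div_cancel hα.ne', rpow_one]
  calc ξ t = (ξ t ^ α) ^ (1 / α) := hrepr.symm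
    _ ≤ ((1 + 1 / α) * (1 + ξ 0 ^ α) / (t : ℝ)) ^ (1 / α) :=
      rpow_le_rpow (rpow_nonneg (hpos t) α) hle (one_div_pos.2 hα).le
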